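/- With the orders ≺ and ≺ₖ on a finite constraint set I with pairwise distinct variable sets, whose variables form a β-elimination order of the hypergraph of I: for all c, d, e ∈ I, if c ≺ₖ d, c ≺ₖ e and d ≺ e, then d ≺ₖ e. -/

import Mathlib

open Finset
open Finset.Colex
open scoped Classical

variable {n : ℕ} {γ : Type*}

/-- `Xset n k` is the set `Xₖ = {x₁,…,xₖ}` of the first `k` variables, where the
variables are `Fin n` in their natural enumeration (`x_{k+1}` is the index `k`). -/
def Xset (n k : ℕ) : Finset (Fin n) := Finset.univ.filter (fun v => (v : ℕ) < k)

/-- The order `≺`: `c ≺ d` iff for some `k`, `var(c) \ Xₖ ⊊ var(d) \ Xₖ`. -/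
def prec (vr : γ → Finset (Fin n)) (c d : γ) : Prop :=
  ∃ k : ℕ, vr c \ Xset n k ⊂ vr d \ Xset n k

/-- The relations `≺ₖ`, defined inductively on `k`:
`≺₀ = ∅` and `c ≺_{k+1} d` iff `c ≺ₖ d` or there is `e ∈ I` with `c ⪯ₖ e ≺ d`
and `x_{k+1} ∈ var(d) ∩ var(e)`. -/
def preck (I : Finset γ) (vr : γ → Finset (Fin n)) : ℕ → γ → γ → Prop
  | 0 => fun _ _ => False
  | (k+1) => fun c d => preck I vr k c d ∨
      ∃ e ∈ I, (c = e ∨ preck I vr k c e) ∧ prec vr e d ∧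
        ∃ h : k < n, (⟨k, h⟩ : Fin n) ∈ vr d ∧ (⟨k, h⟩ : Fin n) ∈ vr e

/-- `x_{k+1}` is a nest point of the hypergraph of `I` after removing `x₁,…,xₖ`:
the edges (variable sets) containing it, with `Xₖ` removed, form a chain. -/
def NestAt (I : Finset γ) (vr : γ → Finset (Fin n)) (k : ℕ) : Prop :=
  ∀ h : k < n, ∀ c ∈ I, ∀ d ∈ I,
    (⟨k, h⟩ : Fin n) ∈ vr c → (⟨k, h⟩ : Fin n) ∈ vr d →
      vr c \ Xset n k ⊆ vr d \ Xset n k ∨ vr d \ Xset n k ⊆ vr c \ Xset n k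

/-- `x₁,…,xₙ` is a β-elimination order of the hypergraph of `I`. -/
def ElimOrder (I : Finset γ) (vr : γ → Finset (Fin n)) : Prop :=
  ∀ k : ℕ, NestAt I vr k

lemma mem_Xset {v : Fin n} {k : ℕ} : v ∈ Xset n k ↔ (v : ℕ) < k := by
  simp [Xset]

lemma prec_iff_colex (vr : γ → Finset (Fin n)) {c d : γ} :
    prec vr c d ↔ toColex (vr c) < toColex (vr d) := by
  rw [toColex_lt_toColex_iff_exists_forall_lt]
  constructor
  · rintro ⟨k, hsub⟩
    obtain ⟨a, ha, hans⟩ := Finset.exists_of_ssubset hsub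
    rw [Finset.mem_sdiff] at ha
    have hak : ¬ ((a : ℕ) < k) := fun h => ha.2 (mem_Xset.mpr h)
    refine ⟨a, ha.1, fun has => hans (Finset.mem_sdiff.mpr ⟨has, ha.2⟩), fun b hbs hbt => ?_⟩
    have hb : (b : ℕ) < k := by
      by_contra hb
      have hbm : b ∈ vr c \ Xset n k :=
        Finset.mem_sdiff.mpr ⟨hbs, fun hbk => hb (mem_Xset.mp hbk)⟩
      exact hbt (Finset.mem_sdiff.mp (hsub.1 hbm)).1
    exact Fin.lt_def.mpr (by omega)
  · rintro ⟨a, hat, has, hmax⟩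
    refine ⟨(a : ℕ), Finset.ssubset_def.mpr ⟨?_, ?_⟩⟩
    · intro x hx
      rw [Finset.mem_sdiff] at hx ⊢
      refine ⟨?_, hx.2⟩
      by_contra hxd
      have := hmax x hx.1 hxd
      exact hx.2 (mem_Xset.mpr (Fin.lt_def.mp this))
    · intro hsup
      have haX : a ∉ Xset n (a : ℕ) := fun h => by simp [mem_Xset] at h
      have : a ∈ vr c \ Xset n (a : ℕ) := hsup (Finset.mem_sdiff.mpr ⟨hat, haX⟩)
      exact has (Finset.mem_sdiff.mp this).1

lemma prec_trans (vr : γ → Finset (Fin n)) {c d e : γ}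
    (h1 : prec vr c d) (h2 : prec vr d e) : prec vr c e := by
  rw [prec_iff_colex] at *
  exact lt_trans h1 h2

lemma prec_irrefl (vr : γ → Finset (Fin n)) {c d : γ} (h : vr c = vr d) : ¬ prec vr c d := by
  rw [prec_iff_colex, h]
  exact lt_irrefl _

lemma prec_asymm (vr : γ → Finset (Fin n)) {c d : γ}
    (h1 : prec vr c d) (h2 : prec vr d c) : False := by
  rw [prec_iff_colex] at *
  exact lt_asymm h1 h2

lemma prec_total (vr : γ → Finset (Fin n)) {c d : γ} (h : vr c ≠ vr d) :
    prec vr c d ∨ prec vr d c := by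
  rw [prec_iff_colex, prec_iff_colex]
  exact lt_or_gt_of_ne (fun hh => h (_root_.toColex_inj.mp hh))

/-- Key consequence of the nest point property: if `a ≺ b` and they share the variable
of index `j`, then `vr a \ Xⱼ ⊆ vr b \ Xⱼ`. -/
lemma nest_sub (I : Finset γ) (vr : γ → Finset (Fin n)) (helim : ElimOrder I vr)
    {a b : γ} (ha : a ∈ I) (hb : b ∈ I) {j : ℕ} (hj : j < n)
    (hja : (⟨j, hj⟩ : Fin n) ∈ vr a) (hjb : (⟨j, hj⟩ : Fin n) ∈ vr b)
    (hab : prec vr a b) : vr a \ Xset n j ⊆ vr b \ Xset n j := by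
  rcases helim j hj a ha b hb hja hjb with h | h
  · exact h
  · intro x hx
    rw [Finset.mem_sdiff] at hx ⊢
    refine ⟨?_, hx.2⟩
    by_contra hxb
    obtain ⟨m, hmb, hms, hmax⟩ :=
      toColex_lt_toColex_iff_exists_forall_lt.mp ((prec_iff_colex vr).mp hab)
    have hxm : x < m := hmax x hx.1 hxb
    have hxj : ¬ ((x : ℕ) < j) := fun hh => hx.2 (mem_Xset.mpr hh)
    have hmX : m ∉ Xset n j := fun hm => by
      have := mem_Xset.mp hm
      have := Fin.lt_def.mp hxm
      omega
    have : m ∈ vr a \ Xset n j := h (Finset.mem_sdiff.mpr ⟨hmb, hmX⟩)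
    exact hms (Finset.mem_sdiff.mp this).1

lemma preck_succ_iff (I : Finset γ) (vr : γ → Finset (Fin n)) {k : ℕ} {c d : γ} :
    preck I vr (k+1) c d ↔ (preck I vr k c d ∨
      ∃ e ∈ I, (c = e ∨ preck I vr k c e) ∧ prec vr e d ∧
        ∃ h : k < n, (⟨k, h⟩ : Fin n) ∈ vr d ∧ (⟨k, h⟩ : Fin n) ∈ vr e) := Iff.rfl

lemma preck_mono (I : Finset γ) (vr : γ → Finset (Fin n)) {j k : ℕ} (hjk : j ≤ k)
    {c d : γ} (h : preck I vr j c d) : preck I vr k c d := by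
  induction hjk with
  | refl => exact h
  | step _ ih => exact (preck_succ_iff I vr).mpr (Or.inl ih)

lemma preck_prec (I : Finset γ) (vr : γ → Finset (Fin n)) :
    ∀ {k : ℕ} {c d : γ}, preck I vr k c d → prec vr c d := by
  intro k
  induction k with
  | zero => intro c d h; exact h.elim
  | succ k ih =>
    intro c d h
    rcases (preck_succ_iff I vr).mp h with h | ⟨e, _, hce, hed, _⟩
    · exact ih h
    · rcases hce with rfl | hce
      · exact hed
      · exact prec_trans vr (ih hce) hed

lemma preck_decomp (I : Finset γ) (vr : γ → Finset (Fin n)) :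
    ∀ {k : ℕ} {c d : γ}, preck I vr k c d →
      ∃ j, j < k ∧ ∃ (hj : j < n), ∃ g ∈ I, (c = g ∨ preck I vr j c g) ∧ prec vr g d ∧
        (⟨j, hj⟩ : Fin n) ∈ vr g ∧ (⟨j, hj⟩ : Fin n) ∈ vr d := by
  intro k
  induction k with
  | zero => intro c d h; exact h.elim
  | succ k ih =>
    intro c d h
    rcases (preck_succ_iff I vr).mp h with h | ⟨g, hgI, hcg, hgd, hk, hkd, hkg⟩
    · obtain ⟨j, hjk, rest⟩ := ih h
      exact ⟨j, Nat.lt_succ_of_lt hjk, rest⟩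
    · exact ⟨k, Nat.lt_succ_self k, hk, g, hgI, hcg, hgd, hkg, hkd⟩

lemma preck_step (I : Finset γ) (vr : γ → Finset (Fin n)) {j : ℕ} (hj : j < n)
    {d g e : γ} (hgI : g ∈ I) (hdg : d = g ∨ preck I vr j d g) (hge : prec vr g e)
    (hjg : (⟨j, hj⟩ : Fin n) ∈ vr g) (hje : (⟨j, hj⟩ : Fin n) ∈ vr e) :
    preck I vr (j+1) d e :=
  (preck_succ_iff I vr).mpr (Or.inr ⟨g, hgI, hdg, hge, hj, hje, hjg⟩)

lemma diff_lift {s t : Finset (Fin n)} {j k : ℕ} (hjk : j ≤ k)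
    (h : s \ Xset n j ⊆ t \ Xset n j) : s \ Xset n k ⊆ t \ Xset n k := by
  intro x hx
  rw [Finset.mem_sdiff] at hx ⊢
  have hxk : ¬ ((x : ℕ) < k) := fun hh => hx.2 (mem_Xset.mpr hh)
  have : x ∈ t \ Xset n j :=
    h (Finset.mem_sdiff.mpr ⟨hx.1, fun hh => hxk (by have := mem_Xset.mp hh; omega)⟩)
  exact ⟨(Finset.mem_sdiff.mp this).1, hx.2⟩

/-- Along a `≺ₖ`-chain, the variables above `Xₖ` only grow. -/
lemma preck_high (I : Finset γ) (vr : γ → Finset (Fin n)) (helim : ElimOrder I vr) :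
    ∀ {k : ℕ} {c d : γ}, d ∈ I → preck I vr k c d →
      vr c \ Xset n k ⊆ vr d \ Xset n k := by
  intro k
  induction k with
  | zero => intro c d _ h; exact h.elim
  | succ k ih =>
    intro c d hdI h
    rcases (preck_succ_iff I vr).mp h with h | ⟨g, hgI, hcg, hgd, hk, hkd, hkg⟩
    · exact diff_lift (Nat.le_succ k) (ih hdI h)
    · have hgd' : vr g \ Xset n k ⊆ vr d \ Xset n k :=
        nest_sub I vr helim hgI hdI hk hkg hkd hgd
      rcases hcg with rfl | hcg
      · exact diff_lift (Nat.le_succ k) hgd'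
      · exact diff_lift (Nat.le_succ k) ((ih hgI hcg).trans hgd')

/-- Statement C1: membership of low indices propagates to larger constraints. -/
lemma lemC1 (I : Finset γ) (vr : γ → Finset (Fin n)) (helim : ElimOrder I vr) :
    ∀ j : ℕ, ∀ {k' : ℕ} (hk' : k' < n) (hj : j < n), j < k' →
    ∀ {f g d e : γ}, g ∈ I → d ∈ I → e ∈ I →
    (f = g ∨ preck I vr j f g) → prec vr g d →
    (⟨j, hj⟩ : Fin n) ∈ vr g → (⟨j, hj⟩ : Fin n) ∈ vr d →
    (⟨k', hk'⟩ : Fin n) ∈ vr f → (⟨k', hk'⟩ : Fin n) ∉ vr d → (⟨k', hk'⟩ : Fin n) ∈ vr e →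
    prec vr d e → (⟨j, hj⟩ : Fin n) ∈ vr e := by
  intro j
  induction j using Nat.strong_induction_on with
  | _ j ihj =>
  intro k' hk' hj hjk f g d e hgI hdI heI hfg hgd hjg hjd hkf hkd hke hde
  have hnest : vr g \ Xset n j ⊆ vr d \ Xset n j :=
    nest_sub I vr helim hgI hdI hj hjg hjd hgd
  have hkg : (⟨k', hk'⟩ : Fin n) ∉ vr g := by
    intro hkg
    have : (⟨k', hk'⟩ : Fin n) ∈ vr d \ Xset n j :=
      hnest (Finset.mem_sdiff.mpr ⟨hkg, fun hh => by have := mem_Xset.mp hh; simp at this; omega⟩)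
    exact hkd (Finset.mem_sdiff.mp this).1
  rcases hfg with rfl | hfg
  · exact absurd hkf hkg
  · obtain ⟨j₂, hj₂j, hj₂n, g₂, hg₂I, hfg₂, hg₂g, hj₂g₂, hj₂g⟩ := preck_decomp I vr hfg
    have hge : prec vr g e := prec_trans vr hgd hde
    have hj₂e : (⟨j₂, hj₂n⟩ : Fin n) ∈ vr e :=
      ihj j₂ hj₂j hk' hj₂n (lt_trans hj₂j hjk) hg₂I hgI heI hfg₂ hg₂g hj₂g₂ hj₂g hkf hkg hke hge
    have hnest2 : vr g \ Xset n j₂ ⊆ vr e \ Xset n j₂ :=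
      nest_sub I vr helim hgI heI hj₂n hj₂g hj₂e hge
    have : (⟨j, hj⟩ : Fin n) ∈ vr e \ Xset n j₂ :=
      hnest2 (Finset.mem_sdiff.mpr ⟨hjg, fun hh => by have := mem_Xset.mp hh; simp at this; omega⟩)
    exact (Finset.mem_sdiff.mp this).1

/-- Statement T5: redirecting a chain `a ≺ₘ e` through a constraint `d` sharing a
high variable with `a`. -/
lemma lemT5 (I : Finset γ) (vr : γ → Finset (Fin n)) (helim : ElimOrder I vr)
    {m t : ℕ} (ht : t < n) {a d e : γ} (hdI : d ∈ I) (heI : e ∈ I)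
    (hae : preck I vr m a e) (had : prec vr a d) (hde : prec vr d e)
    (hta : (⟨t, ht⟩ : Fin n) ∈ vr a) (htd : (⟨t, ht⟩ : Fin n) ∈ vr d) (hmt : m ≤ t + 1) :
    preck I vr (t+1) d e := by
  obtain ⟨j₃, hj₃m, hj₃n, g₃, hg₃I, hag₃, hg₃e, hj₃g₃, hj₃e⟩ := preck_decomp I vr hae
  by_cases hj₃d : (⟨j₃, hj₃n⟩ : Fin n) ∈ vr d
  · exact preck_mono I vr (by omega)
      (preck_step I vr hj₃n hdI (Or.inl rfl) hde hj₃d hj₃e)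
  · have hj₃t : j₃ ≤ t := by omega
    have htg₃ : (⟨t, ht⟩ : Fin n) ∈ vr g₃ := by
      rcases hag₃ with rfl | h
      · exact hta
      · have hh := preck_high I vr helim hg₃I h
        have : (⟨t, ht⟩ : Fin n) ∈ vr g₃ \ Xset n j₃ :=
          hh (Finset.mem_sdiff.mpr ⟨hta, fun hx => by have := mem_Xset.mp hx; simp at this; omega⟩)
        exact (Finset.mem_sdiff.mp this).1
    have hnest : vr g₃ \ Xset n j₃ ⊆ vr e \ Xset n j₃ :=
      nest_sub I vr helim hg₃I heI hj₃n hj₃g₃ hj₃e hg₃e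
    have hte : (⟨t, ht⟩ : Fin n) ∈ vr e := by
      have : (⟨t, ht⟩ : Fin n) ∈ vr e \ Xset n j₃ :=
        hnest (Finset.mem_sdiff.mpr ⟨htg₃, fun hx => by have := mem_Xset.mp hx; simp at this; omega⟩)
      exact (Finset.mem_sdiff.mp this).1
    exact preck_step I vr ht hdI (Or.inl rfl) hde htd hte

/-- Statement T3: redirect the target of a chain `d ≺ₖ g` to a constraint `e`
above `g` sharing a variable of index `< k` with `g`. -/
lemma lemT3 (I : Finset γ) (vr : γ → Finset (Fin n)) (helim : ElimOrder I vr)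
    {k j : ℕ} (hj : j < n) {d g e : γ} (hgI : g ∈ I) (heI : e ∈ I)
    (hdg : preck I vr k d g) (hge : prec vr g e) (hjk : j < k)
    (hjg : (⟨j, hj⟩ : Fin n) ∈ vr g) (hje : (⟨j, hj⟩ : Fin n) ∈ vr e) :
    preck I vr k d e := by
  obtain ⟨j₄, hj₄k, hj₄n, h, hhI, hdh, hhg, hj₄h, hj₄g⟩ := preck_decomp I vr hdg
  rcases Nat.lt_or_ge j₄ j with hlt | hge'
  · have h1 : preck I vr (j₄+1) d g := preck_step I vr hj₄n hhI hdh hhg hj₄h hj₄g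
    have h2 : preck I vr j d g := preck_mono I vr (by omega) h1
    exact preck_mono I vr (by omega)
      (preck_step I vr hj hgI (Or.inr h2) hge hjg hje)
  · have hj₄e : (⟨j₄, hj₄n⟩ : Fin n) ∈ vr e := by
      rcases Nat.eq_or_lt_of_le hge' with heq | hlt
      · subst heq; exact hje
      · have hnest : vr g \ Xset n j ⊆ vr e \ Xset n j :=
          nest_sub I vr helim hgI heI hj hjg hje hge
        have : (⟨j₄, hj₄n⟩ : Fin n) ∈ vr e \ Xset n j :=
          hnest (Finset.mem_sdiff.mpr ⟨hj₄g, fun hx => by have := mem_Xset.mp hx; simp at this; omega⟩)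
        exact (Finset.mem_sdiff.mp this).1
    have hhe : prec vr h e := prec_trans vr hhg hge
    exact preck_mono I vr (by omega)
      (preck_step I vr hj₄n hhI hdh hhe hj₄h hj₄e)

/-- Statement T1g: if `f ≺ₖ d`, `f` and `e` share a variable of index `< k`, and
`d ≺ e`, then `d ≺ₖ e`. -/
lemma lemT1g (I : Finset γ) (vr : γ → Finset (Fin n)) (helim : ElimOrder I vr) :
    ∀ k : ℕ, ∀ {j : ℕ} (hj : j < n), j < k → ∀ {f d e : γ}, d ∈ I → e ∈ I →
    preck I vr k f d → (⟨j, hj⟩ : Fin n) ∈ vr f → (⟨j, hj⟩ : Fin n) ∈ vr e →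
    prec vr d e → preck I vr k d e := by
  intro k
  induction k using Nat.strong_induction_on with
  | _ k ihk =>
  intro j hj hjk f d e hdI heI hfd hjf hje hde
  by_cases hjd : (⟨j, hj⟩ : Fin n) ∈ vr d
  · exact preck_mono I vr (by omega)
      (preck_step I vr hj hdI (Or.inl rfl) hde hjd hje)
  obtain ⟨j₂, hj₂k, hj₂n, g₂, hg₂I, hfg₂, hg₂d, hj₂g₂, hj₂d⟩ := preck_decomp I vr hfd
  rcases lt_trichotomy j₂ j with h1 | h1 | h1
  · have hj₂e : (⟨j₂, hj₂n⟩ : Fin n) ∈ vr e :=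
      lemC1 I vr helim j₂ hj hj₂n h1 hg₂I hdI heI hfg₂ hg₂d hj₂g₂ hj₂d hjf hjd hje hde
    exact preck_mono I vr (by omega)
      (preck_step I vr hj₂n hdI (Or.inl rfl) hde hj₂d hj₂e)
  · exfalso; subst h1; exact hjd hj₂d
  · have hg₂e : prec vr g₂ e := prec_trans vr hg₂d hde
    rcases hfg₂ with rfl | hfg₂
    · have hnest : vr f \ Xset n j ⊆ vr e \ Xset n j :=
        nest_sub I vr helim hg₂I heI hj hjf hje hg₂e
      have hj₂e : (⟨j₂, hj₂n⟩ : Fin n) ∈ vr e := by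
        have : (⟨j₂, hj₂n⟩ : Fin n) ∈ vr e \ Xset n j :=
          hnest (Finset.mem_sdiff.mpr ⟨hj₂g₂, fun hx => by have := mem_Xset.mp hx; simp at this; omega⟩)
        exact (Finset.mem_sdiff.mp this).1
      exact preck_mono I vr (by omega)
        (preck_step I vr hj₂n hdI (Or.inl rfl) hde hj₂d hj₂e)
    · have hg₂e' : preck I vr j₂ g₂ e :=
        ihk j₂ hj₂k hj h1 hg₂I heI hfg₂ hjf hje hg₂e
      have := lemT5 I vr helim hj₂n hdI heI hg₂e' hg₂d hde hj₂g₂ hj₂d (by omega)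
      exact preck_mono I vr (by omega) this

/-- if `c ≺ₖ d`, `c ≺ₖ e` and `d ≺ e`, then `d ≺ₖ e`. -/
theorem stmt8 (I : Finset γ) (vr : γ → Finset (Fin n))
    (hdist : ∀ c ∈ I, ∀ d ∈ I, vr c = vr d → c = d)
    (hcover : I.sup vr = Finset.univ)
    (helim : ElimOrder I vr) :
    ∀ k : ℕ, ∀ c ∈ I, ∀ d ∈ I, ∀ e ∈ I,
      preck I vr k c d → preck I vr k c e → prec vr d e → preck I vr k d e := by
  intro k
  induction k with
  | zero => intro c _ d _ e _ h; exact h.elim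
  | succ k IH =>
    suffices H : ∀ N : ℕ, ∀ e ∈ I, (I.filter (fun a => prec vr a e)).card < N →
        ∀ c ∈ I, ∀ d ∈ I, preck I vr (k+1) c d → preck I vr (k+1) c e → prec vr d e →
        preck I vr (k+1) d e by
      intro c hc d hd e he hcd hce hde
      exact H ((I.filter (fun a => prec vr a e)).card + 1) e he (Nat.lt_succ_self _)
        c hc d hd hcd hce hde
    intro N
    induction N with
    | zero => intro e _ h; exact absurd h (Nat.not_lt_zero _)
    | succ N ihN =>
      intro e he hrank c hc d hd hcd0 hce0 hde
      have hrankN : ∀ e' ∈ I, prec vr e' e →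
          (I.filter (fun a => prec vr a e')).card < N := by
        intro e' he' hee'
        have hlt : (I.filter (fun a => prec vr a e')).card <
            (I.filter (fun a => prec vr a e)).card := by
          apply Finset.card_lt_card
          rw [Finset.ssubset_def]
          constructor
          · intro a ha
            rw [Finset.mem_filter] at ha ⊢
            exact ⟨ha.1, prec_trans vr ha.2 hee'⟩
          · intro hsub
            have he'mem : e' ∈ I.filter (fun a => prec vr a e) :=
              Finset.mem_filter.mpr ⟨he', hee'⟩
            have := Finset.mem_filter.mp (hsub he'mem)
            exact prec_irrefl vr rfl this.2
        omega
      rcases (preck_succ_iff I vr).mp hcd0 with hcd | ⟨f, hfI, hcf, hfd, hkn, hkd, hkf⟩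
      · rcases (preck_succ_iff I vr).mp hce0 with hce | ⟨f, hfI, hcf, hfe, hkn, hke, hkf⟩
        · -- case A
          exact (preck_succ_iff I vr).mpr (Or.inl (IH c hc d hd e he hcd hce hde))
        · -- case B
          by_cases hvdf : vr d = vr f
          · have hdf : d = f := hdist d hd f hfI hvdf
            exact (preck_succ_iff I vr).mpr
              (Or.inr ⟨f, hfI, Or.inl hdf, hfe, hkn, hke, hkf⟩)
          · rcases prec_total vr hvdf with hdf | hfd'
            · have hcf' : preck I vr k c f := by
                rcases hcf with rfl | h
                · exact absurd hdf (fun hh => prec_asymm vr hh (preck_prec I vr hcd))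
                · exact h
              have hdkf := IH c hc d hd f hfI hcd hcf' hdf
              exact (preck_succ_iff I vr).mpr
                (Or.inr ⟨f, hfI, Or.inr hdkf, hfe, hkn, hke, hkf⟩)
            · have hfkd : preck I vr k f d := by
                rcases hcf with rfl | h
                · exact hcd
                · exact IH c hc f hfI d hd h hcd hfd'
              exact lemT1g I vr helim (k+1) hkn (Nat.lt_succ_self k) hd he
                (preck_mono I vr (Nat.le_succ k) hfkd) hkf hke hde
      · rcases (preck_succ_iff I vr).mp hce0 with hce | ⟨g', hg'I, hcg', hg'e, hkn', hke, hkg'⟩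
        · -- case C
          obtain ⟨j, hjk1, hjn, g, hgI, hcg, hge2, hjg, hje⟩ := preck_decomp I vr hce
          by_cases hjd : (⟨j, hjn⟩ : Fin n) ∈ vr d
          · exact preck_mono I vr (by omega)
              (preck_step I vr hjn hd (Or.inl rfl) hde hjd hje)
          by_cases hvdg : vr d = vr g
          · exact absurd (hvdg ▸ hjg) hjd
          rcases prec_total vr hvdg with hdg | hgd
          · -- d ≺ g
            have hcg2 : preck I vr (k+1) c g := by
              rcases hcg with rfl | h
              · exact absurd hdg (fun hh => prec_asymm vr hh (preck_prec I vr hcd0))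
              · exact preck_mono I vr (by omega) h
            have hdg' : preck I vr (k+1) d g :=
              ihN g hgI (hrankN g hgI hge2) c hc d hd hcd0 hcg2 hdg
            exact lemT3 I vr helim hjn hgI he hdg' hge2 (by omega) hjg hje
          · -- g ≺ d
            rcases hcg with rfl | hcg
            · exact lemT1g I vr helim (k+1) hjn (by omega) hd he hcd0 hjg hje hde
            · have hcg2 : preck I vr (k+1) c g := preck_mono I vr (by omega) hcg
              have hgd' : preck I vr (k+1) g d :=
                ihN d hd (hrankN d hd hde) c hc g hgI hcg2 hcd0 hgd
              exact lemT1g I vr helim (k+1) hjn (by omega) hd he hgd' hjg hje hde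
        · -- case D
          exact (preck_succ_iff I vr).mpr
            (Or.inr ⟨d, hd, Or.inl rfl, hde, hkn, hke, hkd⟩)
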